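/- Local equivalence of ensembles, positive case: Let L, ℓ ∈ N₊ with 10ℓ² ≤ L and 0 ≤ M ≤ L^d, set ρ̂ = M/|Λ_L| where Λ_L = (−L/2, L/2)^d ∩ Z^d. Then for every function f depending only on coordinates in Λ_ℓ such that the canonical-ensemble averages ⟨f⟩_{Λ_ℓ,N} ≥ 0 for all N, one has ⟨f⟩_{Λ_L,M} ≤ (1 + 4(ℓ²/L)^d) ⟨f⟩_{ρ̂}, where ⟨·⟩_{Λ_L,M} is the expectation under the uniform measure on configurations of Λ_L with exactly M particles, and ⟨·⟩_{ρ̂} is the Bernoulli(ρ̂) product expectation. -/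

import Mathlib

open MeasureTheory

/-- `μ` is the Bernoulli(ρ) product measure on `{0,1}^{ℤᵈ}`. -/
def IsBernoulliProduct {d : ℕ} (ρ : ℝ) (μ : Measure ((Fin d → ℤ) → Bool)) : Prop :=
  IsProbabilityMeasure μ ∧
    ∀ (s : Finset (Fin d → ℤ)) (b : (Fin d → ℤ) → Bool),
      μ {η | ∀ x ∈ s, η x = b x} = ∏ x ∈ s, ENNReal.ofReal (if b x then ρ else 1 - ρ)

/-- The discrete cube `Λ_L = (−L/2, L/2)^d ∩ ℤ^d`. -/
noncomputable def cubeF (d L : ℕ) : Finset (Fin d → ℤ) :=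
  Fintype.piFinset fun _ : Fin d =>
    (Finset.Icc (-(L : ℤ)) (L : ℤ)).filter fun k => -(L : ℤ) < 2 * k ∧ 2 * k < (L : ℤ)

/-- The exclusion configuration associated with a particle set `A`. -/
def configOf {d : ℕ} (A : Finset (Fin d → ℤ)) : (Fin d → ℤ) → Bool :=
  fun z => decide (z ∈ A)

/-- The canonical-ensemble average `⟨f⟩_{Λ,M}`: the average of `f` over the uniform
measure on configurations of `Λ` with exactly `M` particles. -/
noncomputable def canonicalAvg {d : ℕ} (Λ : Finset (Fin d → ℤ)) (M : ℕ)
    (f : ((Fin d → ℤ) → Bool) → ℝ) : ℝ :=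
  (∑ A ∈ Λ.powersetCard M, f (configOf A)) / ((Λ.powersetCard M).card : ℝ)

section Aux
open Finset Nat


lemma factor_nonneg {N : ℕ} {m : ℝ} (h : (N:ℝ) ≤ m) {i : ℕ} (hi : i < N) :
    0 ≤ 1 - (i:ℝ)/m := by
  have h1 : (1:ℝ) ≤ m := le_trans (by exact_mod_cast Nat.one_le_iff_ne_zero.2 (by omega)) h
  have hm : (0:ℝ) < m := by linarith
  have : (i:ℝ) ≤ m := le_trans (by exact_mod_cast Nat.le_of_lt hi) h
  have := div_le_one_of_le₀ this hm.le
  linarith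

lemma claimA (m q : ℝ) (hm : 0 ≤ m) (hq : 0 ≤ q) :
    ∀ n N : ℕ, N ≤ n → (N:ℝ) ≤ m → ((n - N : ℕ):ℝ) ≤ q →
    (∏ i ∈ range N, (1 - (i:ℝ)/m)) * (∏ j ∈ range (n-N), (1 - (j:ℝ)/q)) ≤
      ∏ t ∈ range (n-2), (1 - (t:ℝ)/(m+q)) := by
  intro n
  induction n with
  | zero =>
    intro N hN _ _
    interval_cases N
    simp
  | succ n IH =>
    intro N hN hNm hNq
    have hk : 0 ≤ m + q := by linarith
    rcases Nat.lt_or_ge n 2 with hn2 | hn2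
    · have hR : (n+1) - 2 = 0 := by omega
      rw [hR]
      simp only [range_zero, prod_empty]
      have h1 : (∏ i ∈ range N, (1 - (i:ℝ)/m)) ≤ 1 :=
        prod_le_one (fun i hi => factor_nonneg hNm (mem_range.1 hi))
          (fun i hi => by
            have : 0 ≤ (i:ℝ)/m := div_nonneg (Nat.cast_nonneg i) hm
            linarith)
      have h2 : (∏ j ∈ range (n+1-N), (1 - (j:ℝ)/q)) ≤ 1 :=
        prod_le_one (fun j hj => factor_nonneg hNq (mem_range.1 hj))
          (fun j hj => by
            have : 0 ≤ (j:ℝ)/q := div_nonneg (Nat.cast_nonneg j) hq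
            linarith)
      have h3 : 0 ≤ (∏ i ∈ range N, (1 - (i:ℝ)/m)) :=
        prod_nonneg (fun i hi => factor_nonneg hNm (mem_range.1 hi))
      calc (∏ i ∈ range N, (1 - (i:ℝ)/m)) * (∏ j ∈ range (n+1-N), (1 - (j:ℝ)/q))
          ≤ (∏ i ∈ range N, (1 - (i:ℝ)/m)) * 1 := mul_le_mul_of_nonneg_left h2 h3
        _ ≤ 1 := by simpa using h1
    · -- n ≥ 2
      have hcastq : ((n+1-N:ℕ):ℝ) = (n:ℝ) + 1 - N := by
        push_cast [Nat.cast_sub (by omega : N ≤ n+1)]; ring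
      have hsum : (n:ℝ) + 1 ≤ m + q := by rw [hcastq] at hNq; linarith
      have hsplit : (n+1) - 2 = (n-2) + 1 := by omega
      rw [hsplit, prod_range_succ]
      have hcast : ((n-2 : ℕ):ℝ) = (n:ℝ) - 2 := by
        push_cast [Nat.cast_sub (by omega : 2 ≤ n)]; ring
      have hRHS0 : 0 ≤ ∏ t ∈ range (n-2), (1 - (t:ℝ)/(m+q)) :=
        prod_nonneg (fun t ht => factor_nonneg (by rw [hcast]; linarith) (mem_range.1 ht))
      by_cases hcase : 1 ≤ N ∧ ((n:ℝ)-2) * m ≤ ((N:ℝ)-1) * (m+q)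
      · obtain ⟨hN1, hce⟩ := hcase
        have hm1 : (1:ℝ) ≤ m := le_trans (by exact_mod_cast hN1) hNm
        have hmpos : (0:ℝ) < m := by linarith
        have hkpos : (0:ℝ) < m + q := by linarith
        have hc1 : ((N-1:ℕ):ℝ) = (N:ℝ) - 1 := by
          push_cast [Nat.cast_sub (by omega : 1 ≤ N)]; ring
        have hPsplit : (∏ i ∈ range N, (1 - (i:ℝ)/m))
            = (∏ i ∈ range (N-1), (1 - (i:ℝ)/m)) * (1 - ((N-1:ℕ):ℝ)/m) := by
          rw [← prod_range_succ, Nat.sub_add_cancel hN1]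
        rw [hPsplit]
        have hfac : 1 - ((N-1:ℕ):ℝ)/m ≤ 1 - ((n-2:ℕ):ℝ)/(m+q) := by
          rw [hc1, hcast]
          have : ((n:ℝ)-2)/(m+q) ≤ ((N:ℝ)-1)/m := by
            rw [div_le_div_iff₀ hkpos hmpos]; linarith
          linarith
        have hIH := IH (N-1) (by omega) (by rw [hc1]; linarith)
          (by rwa [show n - (N-1) = n+1-N from by omega])
        rw [show n - (N-1) = n+1-N from by omega] at hIH
        have hfac0 : 0 ≤ 1 - ((N-1:ℕ):ℝ)/m := factor_nonneg hNm (by omega : N - 1 < N)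
        calc (∏ i ∈ range (N-1), (1 - (i:ℝ)/m)) * (1 - ((N-1:ℕ):ℝ)/m)
              * (∏ j ∈ range (n+1-N), (1 - (j:ℝ)/q))
            = ((∏ i ∈ range (N-1), (1 - (i:ℝ)/m)) * (∏ j ∈ range (n+1-N), (1 - (j:ℝ)/q)))
              * (1 - ((N-1:ℕ):ℝ)/m) := by ring
          _ ≤ (∏ t ∈ range (n-2), (1 - (t:ℝ)/(m+q))) * (1 - ((n-2:ℕ):ℝ)/(m+q)) :=
              mul_le_mul hIH hfac hfac0 hRHS0
      · -- remove a factor from the q-product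
        have hq1 : 1 ≤ n + 1 - N := by
          rcases Nat.lt_or_ge N 1 with h | h
          · omega
          · by_contra hcon
            have hNn : N = n + 1 := by omega
            have hlt : ((N:ℝ)-1) * (m+q) < ((n:ℝ)-2) * m := by
              rcases not_and_or.1 hcase with h' | h'
              · omega
              · linarith [lt_of_not_ge h']
            have hm1 : (1:ℝ) ≤ m := le_trans (by exact_mod_cast h) hNm
            have : ((n:ℝ)) * (m+q) < ((n:ℝ)-2) * m := by
              rw [hNn] at hlt; push_cast at hlt; linarith
            nlinarith [Nat.cast_nonneg (α := ℝ) n]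
        have hq1' : (1:ℝ) ≤ q := le_trans (by exact_mod_cast hq1) hNq
        have hqpos : (0:ℝ) < q := by linarith
        have hkpos : (0:ℝ) < m + q := by linarith
        have hkey : ((n:ℝ)-2) * q ≤ (((n+1-N:ℕ):ℝ) - 1) * (m+q) := by
          rw [hcastq]
          rcases Nat.lt_or_ge N 1 with h | h
          · have hN0 : N = 0 := by omega
            subst hN0
            push_cast
            nlinarith [hm, hq, Nat.cast_nonneg (α := ℝ) n]
          · have hlt : ((N:ℝ)-1) * (m+q) < ((n:ℝ)-2) * m := by
              rcases not_and_or.1 hcase with h' | h'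
              · omega
              · linarith [lt_of_not_ge h']
            nlinarith
        have h4 : (n+1-N) - 1 = n - N := by omega
        have hQsplit : (∏ j ∈ range (n+1-N), (1 - (j:ℝ)/q))
            = (∏ j ∈ range (n-N), (1 - (j:ℝ)/q)) * (1 - ((n-N:ℕ):ℝ)/q) := by
          rw [← prod_range_succ, show (n-N) + 1 = n+1-N from by omega]
        rw [hQsplit]
        have hcnN : ((n-N:ℕ):ℝ) = ((n+1-N:ℕ):ℝ) - 1 := by
          rw [hcastq]; push_cast [Nat.cast_sub (by omega : N ≤ n)]; ring
        have hfac : 1 - ((n-N:ℕ):ℝ)/q ≤ 1 - ((n-2:ℕ):ℝ)/(m+q) := by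
          rw [hcast, hcnN]
          have : ((n:ℝ)-2)/(m+q) ≤ (((n+1-N:ℕ):ℝ)-1)/q := by
            rw [div_le_div_iff₀ hkpos hqpos]; linarith
          linarith
        have hIH := IH N (by omega) hNm
          (by
            have h5 : ((n - N:ℕ):ℝ) ≤ ((n+1-N:ℕ):ℝ) := Nat.cast_le.2 (by omega)
            linarith)
        have hfac0 : 0 ≤ 1 - ((n-N:ℕ):ℝ)/q := by
          have := factor_nonneg hNq (show (n+1-N) - 1 < n+1-N from by omega)
          rwa [h4] at this
        calc (∏ i ∈ range N, (1 - (i:ℝ)/m)) *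
              ((∏ j ∈ range (n-N), (1 - (j:ℝ)/q)) * (1 - ((n-N:ℕ):ℝ)/q))
            = ((∏ i ∈ range N, (1 - (i:ℝ)/m)) * (∏ j ∈ range (n-N), (1 - (j:ℝ)/q)))
              * (1 - ((n-N:ℕ):ℝ)/q) := by ring
          _ ≤ (∏ t ∈ range (n-2), (1 - (t:ℝ)/(m+q))) * (1 - ((n-2:ℕ):ℝ)/(m+q)) :=
              mul_le_mul hIH hfac hfac0 hRHS0

lemma chooseId (K n M N : ℕ) (hnK : n ≤ K) (hMK : M ≤ K) (hNM : N ≤ M)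
    (hNn : N ≤ n) (hsup : M - N ≤ K - n) :
    (K-n).choose (M-N) * K.descFactorial n
      = K.choose M * (M.descFactorial N * (K-M).descFactorial (n-N)) := by
  have hc : 0 < (M-N)! * ((K-n)-(M-N))! := by positivity
  have hL : ((K-n).choose (M-N) * K.descFactorial n) * ((M-N)! * ((K-n)-(M-N))!) = K ! := by
    calc ((K-n).choose (M-N) * K.descFactorial n) * ((M-N)! * ((K-n)-(M-N))!)
        = ((K-n).choose (M-N) * (M-N)! * ((K-n)-(M-N))!) * K.descFactorial n := by ring
      _ = (K-n)! * K.descFactorial n := by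
          rw [Nat.choose_mul_factorial_mul_factorial hsup]
      _ = K ! := Nat.factorial_mul_descFactorial hnK
  have he : (K-n)-(M-N) = (K-M)-(n-N) := by omega
  have hsub : n - N ≤ K - M := by omega
  have hR : (K.choose M * (M.descFactorial N * (K-M).descFactorial (n-N)))
      * ((M-N)! * ((K-n)-(M-N))!) = K ! := by
    rw [he]
    calc (K.choose M * (M.descFactorial N * (K-M).descFactorial (n-N)))
        * ((M-N)! * ((K-M)-(n-N))!)
        = K.choose M * ((M-N)! * M.descFactorial N)
            * (((K-M)-(n-N))! * (K-M).descFactorial (n-N)) := by ring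
      _ = K.choose M * M ! * (K-M)! := by
          rw [Nat.factorial_mul_descFactorial hNM, Nat.factorial_mul_descFactorial hsub]
      _ = K ! := Nat.choose_mul_factorial_mul_factorial hMK
  exact Nat.eq_of_mul_eq_mul_right hc (hL.trans hR.symm)

lemma descFactorial_cast (a r : ℕ) (h : r ≤ a) :
    ((a.descFactorial r : ℕ):ℝ) = ∏ i ∈ range r, ((a:ℝ) - i) := by
  rw [Nat.descFactorial_eq_prod_range, Nat.cast_prod]
  exact prod_congr rfl fun i hi =>
    Nat.cast_sub (le_trans (Nat.le_of_lt (mem_range.1 hi)) h)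

lemma prod_sub_eq (a r : ℕ) (h : r ≤ a) :
    ∏ i ∈ range r, ((a:ℝ) - i) = (a:ℝ)^r * ∏ i ∈ range r, (1 - (i:ℝ)/a) := by
  rcases Nat.eq_zero_or_pos r with h0 | hr
  · subst h0; simp
  · have ha : (0:ℝ) < a := by exact_mod_cast lt_of_lt_of_le hr h
    calc ∏ i ∈ range r, ((a:ℝ) - i)
        = ∏ i ∈ range r, ((a:ℝ) * (1 - (i:ℝ)/a)) :=
          prod_congr rfl fun i _ => by field_simp
      _ = (∏ _i ∈ range r, (a:ℝ)) * ∏ i ∈ range r, (1 - (i:ℝ)/a) := prod_mul_distrib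
      _ = (a:ℝ)^r * ∏ i ∈ range r, (1 - (i:ℝ)/a) := by rw [prod_const, card_range]

lemma step4 (K n : ℕ) (ε : ℝ) (hK : 0 < K) (hn : n ≤ K)
    (h1 : 4*((n-1:ℕ):ℝ) ≤ ε*K) (h2 : 4*((n-1:ℕ):ℝ) ≤ K) :
    ∏ t ∈ range (n-2), (1 - (t:ℝ)/K) ≤ (1+ε) * ∏ t ∈ range n, (1 - (t:ℝ)/K) := by
  have hKR : (0:ℝ) < K := by exact_mod_cast hK
  have hε : 0 ≤ ε := by
    by_contra h
    push_neg at h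
    have : ε * K < 0 := mul_neg_of_neg_of_pos h hKR
    have h0 : (0:ℝ) ≤ 4*((n-1:ℕ):ℝ) := by positivity
    linarith
  rcases Nat.lt_or_ge n 2 with hn2 | hn2
  · interval_cases n <;> simp <;> linarith
  · have hfn : ∀ t : ℕ, t < n → 0 ≤ 1 - (t:ℝ)/K := by
      intro t ht
      have : (t:ℝ) ≤ K := by exact_mod_cast le_trans (Nat.le_of_lt ht) hn
      have := div_le_one_of_le₀ this hKR.le
      linarith
    have hP : 0 ≤ ∏ t ∈ range (n-2), (1 - (t:ℝ)/K) :=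
      prod_nonneg fun t ht => hfn t (by have := mem_range.1 ht; omega)
    have hsplit : ∏ t ∈ range n, (1 - (t:ℝ)/K)
        = (∏ t ∈ range (n-2), (1 - (t:ℝ)/K)) * (1 - ((n-2:ℕ):ℝ)/K) * (1 - ((n-2+1:ℕ):ℝ)/K) := by
      conv_lhs => rw [show n = n-2+1+1 from by omega]
      rw [prod_range_succ, prod_range_succ]
    rw [show n-2+1 = n-1 from by omega] at hsplit
    rw [hsplit]
    set c2 : ℝ := ((n-2:ℕ):ℝ) with hc2
    set c1 : ℝ := ((n-1:ℕ):ℝ) with hc1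
    have hc12 : c1 = c2 + 1 := by rw [hc1, hc2]; push_cast [Nat.cast_sub (by omega : 2 ≤ n), Nat.cast_sub (by omega : 1 ≤ n)]; ring
    have hc2nn : 0 ≤ c2 := Nat.cast_nonneg _
    have hc1K : c1 ≤ (K:ℝ) := by exact_mod_cast Nat.cast_le.2 (by omega : n - 1 ≤ K)
    have hc1nn : 0 ≤ c1 := Nat.cast_nonneg _
    have ha : 0 ≤ (K:ℝ) - c1 := by linarith
    have hb : (K:ℝ)^3 ≤ ((K:ℝ)+4*c1) * (((K:ℝ)-c1)*((K:ℝ)-c1)) := by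
      nlinarith [mul_nonneg (mul_nonneg hc1nn (by linarith : (0:ℝ) ≤ (K:ℝ) - 4*c1)) hKR.le,
        mul_nonneg (mul_nonneg hc1nn hc1nn) hc1nn]
    have keyK : (K:ℝ)^3 ≤ (1+ε) * ((K:ℝ)-c2) * ((K:ℝ)-c1) * K := by
      calc (K:ℝ)^3 ≤ ((K:ℝ)+4*c1) * (((K:ℝ)-c1)*((K:ℝ)-c1)) := hb
        _ ≤ ((K:ℝ)+4*c1) * (((K:ℝ)-c2)*((K:ℝ)-c1)) := by
            apply mul_le_mul_of_nonneg_left _ (by linarith)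
            exact mul_le_mul_of_nonneg_right (by linarith) ha
        _ ≤ ((K:ℝ)+ε*K) * (((K:ℝ)-c2)*((K:ℝ)-c1)) := by
            apply mul_le_mul_of_nonneg_right (by linarith)
            exact mul_nonneg (by linarith) ha
        _ = (1+ε) * ((K:ℝ)-c2) * ((K:ℝ)-c1) * K := by ring
    have key : (K:ℝ)*K ≤ (1+ε) * ((K:ℝ)-c2) * ((K:ℝ)-c1) :=
      le_of_mul_le_mul_right (by nlinarith [keyK]) hKR
    have key' : 1 ≤ (1+ε) * (1 - c2/K) * (1 - c1/K) := by
      have e1 : 1 - c2/K = ((K:ℝ)-c2)/K := by field_simp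
      have e2 : 1 - c1/K = ((K:ℝ)-c1)/K := by field_simp
      rw [e1, e2]
      rw [show (1+ε) * (((K:ℝ)-c2)/K) * (((K:ℝ)-c1)/K) = ((1+ε) * ((K:ℝ)-c2) * ((K:ℝ)-c1))/(K*K) from by ring]
      rw [le_div_iff₀ (by positivity)]
      linarith
    calc ∏ t ∈ range (n-2), (1 - (t:ℝ)/K)
        = (∏ t ∈ range (n-2), (1 - (t:ℝ)/K)) * 1 := by ring
      _ ≤ (∏ t ∈ range (n-2), (1 - (t:ℝ)/K)) * ((1+ε) * (1 - c2/K) * (1 - c1/K)) :=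
          mul_le_mul_of_nonneg_left key' hP
      _ = (1+ε) * ((∏ t ∈ range (n-2), (1 - (t:ℝ)/K)) * (1 - c2/K) * (1 - c1/K)) := by ring

lemma weight_bound (K n M N : ℕ) (ε : ℝ) (hnK : n ≤ K) (hMK : M ≤ K) (hNM : N ≤ M)
    (hNn : N ≤ n) (hsup : M - N ≤ K - n) (hK : 0 < K)
    (h1 : 4*((n-1:ℕ):ℝ) ≤ ε*K) (h2 : 4*((n-1:ℕ):ℝ) ≤ K) :
    ((K-n).choose (M-N) : ℝ) / (K.choose M : ℝ)
      ≤ (1+ε) * (((M:ℝ)/K)^N * (1-(M:ℝ)/K)^(n-N)) := by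
  have hKR : (0:ℝ) < K := by exact_mod_cast hK
  have hchoosepos : (0:ℝ) < (K.choose M : ℝ) := by exact_mod_cast Nat.choose_pos hMK
  have hQcast : ((K-M:ℕ):ℝ) = (K:ℝ) - M := Nat.cast_sub hMK
  have hnNKM : n - N ≤ K - M := by omega
  set PK := ∏ t ∈ range n, (1 - (t:ℝ)/K) with hPKdef
  set PM := ∏ i ∈ range N, (1 - (i:ℝ)/M) with hPMdef
  set PQ := ∏ j ∈ range (n-N), (1 - (j:ℝ)/((K-M:ℕ):ℝ)) with hPQdef
  have e1 : (K.descFactorial n : ℝ) = (K:ℝ)^n * PK := by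
    rw [descFactorial_cast K n hnK, prod_sub_eq K n hnK]
  have e2 : (M.descFactorial N : ℝ) = (M:ℝ)^N * PM := by
    rw [descFactorial_cast M N hNM, prod_sub_eq M N hNM]
  have e3 : ((K-M).descFactorial (n-N) : ℝ) = ((K-M:ℕ):ℝ)^(n-N) * PQ := by
    rw [descFactorial_cast (K-M) (n-N) hnNKM, prod_sub_eq (K-M) (n-N) hnNKM]
  have keyR : ((K-n).choose (M-N) : ℝ) * ((K:ℝ)^n * PK)
      = (K.choose M : ℝ) * (((M:ℝ)^N * PM) * (((K-M:ℕ):ℝ)^(n-N) * PQ)) := by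
    have := congrArg (Nat.cast : ℕ → ℝ) (chooseId K n M N hnK hMK hNM hNn hsup)
    push_cast at this
    rw [← e1, ← e2, ← e3]
    exact_mod_cast this
  have hPKpos : 0 < PK := by
    apply prod_pos
    intro t ht
    have htn : t < n := mem_range.1 ht
    have : (t:ℝ) < K := by exact_mod_cast lt_of_lt_of_le htn hnK
    have : (t:ℝ)/K < 1 := (div_lt_one hKR).2 this
    linarith
  have hKnpos : (0:ℝ) < (K:ℝ)^n * PK := by positivity
  -- main product inequality
  have hclaim := claimA (M:ℝ) ((K-M:ℕ):ℝ) (Nat.cast_nonneg _) (Nat.cast_nonneg _)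
    n N hNn (by exact_mod_cast hNM) (by exact_mod_cast hnNKM)
  have hmq : (M:ℝ) + ((K-M:ℕ):ℝ) = (K:ℝ) := by rw [hQcast]; ring
  rw [hmq] at hclaim
  have hmain : PM * PQ ≤ (1+ε) * PK :=
    le_trans hclaim (step4 K n ε hK hnK h1 h2)
  -- algebra
  rw [div_le_iff₀ hchoosepos, ← mul_le_mul_iff_of_pos_right hKnpos, keyR]
  have hT : ((1+ε) * (((M:ℝ)/K)^N * (1-(M:ℝ)/K)^(n-N))) * ((K:ℝ)^n)
      = (1+ε) * ((M:ℝ)^N * ((K-M:ℕ):ℝ)^(n-N)) := by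
    have h5 : (1:ℝ) - (M:ℝ)/K = (((K-M:ℕ):ℝ))/K := by rw [hQcast]; field_simp
    have h6 : (K:ℝ)^N * (K:ℝ)^(n-N) = (K:ℝ)^n := by
      rw [← pow_add]
      congr 1
      omega
    rw [h5, div_pow, div_pow, ← h6]
    field_simp
  calc (K.choose M : ℝ) * (((M:ℝ)^N * PM) * (((K-M:ℕ):ℝ)^(n-N) * PQ))
      = ((K.choose M : ℝ) * ((M:ℝ)^N * ((K-M:ℕ):ℝ)^(n-N))) * (PM * PQ) := by ring
    _ ≤ ((K.choose M : ℝ) * ((M:ℝ)^N * ((K-M:ℕ):ℝ)^(n-N))) * ((1+ε) * PK) := by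
        apply mul_le_mul_of_nonneg_left hmain
        positivity
    _ = ((1+ε) * ((M:ℝ)^N * ((K-M:ℕ):ℝ)^(n-N))) * (K.choose M : ℝ) * PK := by ring
    _ = ((1+ε) * (((M:ℝ)/K)^N * (1-(M:ℝ)/K)^(n-N))) * ((K:ℝ)^n) * (K.choose M : ℝ) * PK := by
        rw [hT]
    _ = (1+ε) * (((M:ℝ)/K)^N * (1-(M:ℝ)/K)^(n-N)) * (K.choose M : ℝ) * ((K:ℝ)^n * PK) := by
        ring


lemma fiber_card {d : ℕ} (Λ Λℓ : Finset (Fin d → ℤ)) (hsub : Λℓ ⊆ Λ) (M : ℕ)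
    (B : Finset (Fin d → ℤ)) (hB : B ⊆ Λℓ) :
    ((Λ.powersetCard M).filter fun A => A ∩ Λℓ = B).card
      = if B.card ≤ M then (Λ.card - Λℓ.card).choose (M - B.card) else 0 := by
  split_ifs with hBM
  · rw [← Finset.card_sdiff_of_subset hsub, ← Finset.card_powersetCard]
    apply Finset.card_bij' (fun A _ => A \ Λℓ) (fun C _ => B ∪ C)
    · -- maps into
      intro A hA
      rw [Finset.mem_filter, Finset.mem_powersetCard] at hA
      obtain ⟨⟨hAΛ, hAcard⟩, hAB⟩ := hA
      rw [Finset.mem_powersetCard]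
      constructor
      · exact Finset.sdiff_subset_sdiff hAΛ (le_refl _)
      · have := Finset.card_inter_add_card_sdiff A Λℓ
        rw [hAB] at this
        omega
    · intro C hC
      rw [Finset.mem_powersetCard] at hC
      obtain ⟨hCsub, hCcard⟩ := hC
      rw [Finset.mem_filter, Finset.mem_powersetCard]
      have hdisj : ∀ x ∈ C, x ∉ Λℓ := fun x hx => (Finset.mem_sdiff.1 (hCsub hx)).2
      refine ⟨⟨Finset.union_subset (hB.trans hsub) (hCsub.trans Finset.sdiff_subset), ?_⟩, ?_⟩
      · rw [Finset.card_union_of_disjoint]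
        · omega
        · rw [Finset.disjoint_left]
          intro x hxB hxC
          exact hdisj x hxC (hB hxB)
      · ext x
        simp only [Finset.mem_inter, Finset.mem_union]
        constructor
        · rintro ⟨hx1 | hx1, hx2⟩
          · exact hx1
          · exact absurd hx2 (hdisj x hx1)
        · intro hx
          exact ⟨Or.inl hx, hB hx⟩
    · intro A hA
      rw [Finset.mem_filter] at hA
      ext x
      simp only [Finset.mem_union, Finset.mem_sdiff, ← hA.2, Finset.mem_inter]
      tauto
    · intro C hC
      rw [Finset.mem_powersetCard] at hC
      have hdisj : ∀ x ∈ C, x ∉ Λℓ := fun x hx => (Finset.mem_sdiff.1 (hC.1 hx)).2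
      ext x
      simp only [Finset.mem_sdiff, Finset.mem_union]
      constructor
      · rintro ⟨hx1 | hx1, hx2⟩
        · exact absurd (hB hx1) hx2
        · exact hx1
      · intro hx
        exact ⟨Or.inr hx, hdisj x hx⟩
  · rw [Finset.card_eq_zero, Finset.filter_eq_empty_iff]
    intro A hA
    rw [Finset.mem_powersetCard] at hA
    intro hAB
    have : B ⊆ A := by rw [← hAB]; exact Finset.inter_subset_left
    have := Finset.card_le_card this
    omega

lemma canonical_decomp {d : ℕ} (Λ Λℓ : Finset (Fin d → ℤ)) (hsub : Λℓ ⊆ Λ) (M : ℕ)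
    (f : ((Fin d → ℤ) → Bool) → ℝ)
    (hloc : ∀ η η', (∀ x ∈ Λℓ, η x = η' x) → f η = f η') :
    ∑ A ∈ Λ.powersetCard M, f (configOf A)
      = ∑ N ∈ range (Λℓ.card + 1),
          ((if N ≤ M then ((Λ.card - Λℓ.card).choose (M-N) : ℝ) else 0)
            * ∑ B ∈ Λℓ.powersetCard N, f (configOf B)) := by
  have hlocA : ∀ A : Finset (Fin d → ℤ), f (configOf A) = f (configOf (A ∩ Λℓ)) := by
    intro A
    apply hloc
    intro x hx
    simp only [configOf, decide_eq_decide, Finset.mem_inter]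
    exact ⟨fun h => ⟨h, hx⟩, fun h => h.1⟩
  calc ∑ A ∈ Λ.powersetCard M, f (configOf A)
      = ∑ A ∈ Λ.powersetCard M, f (configOf (A ∩ Λℓ)) := by
        exact Finset.sum_congr rfl fun A _ => hlocA A
    _ = ∑ B ∈ (Λ.powersetCard M).image (fun A => A ∩ Λℓ),
          ((Λ.powersetCard M).filter fun A => A ∩ Λℓ = B).card • f (configOf B) :=
        Finset.sum_comp (fun B => f (configOf B)) (fun A => A ∩ Λℓ)
    _ = ∑ B ∈ Λℓ.powerset,
          ((Λ.powersetCard M).filter fun A => A ∩ Λℓ = B).card • f (configOf B) := by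
        apply Finset.sum_subset
        · intro B hB
          rw [Finset.mem_image] at hB
          obtain ⟨A, _, rfl⟩ := hB
          exact Finset.mem_powerset.2 Finset.inter_subset_right
        · intro B _ hnB
          have : ((Λ.powersetCard M).filter fun A => A ∩ Λℓ = B) = ∅ := by
            rw [Finset.filter_eq_empty_iff]
            intro A hA hAB
            exact hnB (Finset.mem_image.2 ⟨A, hA, hAB⟩)
          rw [this]
          simp
    _ = ∑ N ∈ range (Λℓ.card + 1), ∑ B ∈ Λℓ.powersetCard N,
          ((Λ.powersetCard M).filter fun A => A ∩ Λℓ = B).card • f (configOf B) := by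
        rw [Finset.powerset_card_disjiUnion]; exact Finset.sum_disjiUnion ..
    _ = ∑ N ∈ range (Λℓ.card + 1),
          ((if N ≤ M then ((Λ.card - Λℓ.card).choose (M-N) : ℝ) else 0)
            * ∑ B ∈ Λℓ.powersetCard N, f (configOf B)) := by
        apply Finset.sum_congr rfl
        intro N _
        rw [Finset.mul_sum]
        apply Finset.sum_congr rfl
        intro B hB
        rw [Finset.mem_powersetCard] at hB
        rw [fiber_card Λ Λℓ hsub M B hB.1, hB.2]
        split_ifs with h
        · rw [nsmul_eq_mul]
        · simp


lemma cyl_measurable {d : ℕ} (s : Finset (Fin d → ℤ)) (b : (Fin d → ℤ) → Bool) :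
    MeasurableSet {η : (Fin d → ℤ) → Bool | ∀ x ∈ s, η x = b x} := by
  have : {η : (Fin d → ℤ) → Bool | ∀ x ∈ s, η x = b x}
      = ⋂ x ∈ (s : Set (Fin d → ℤ)), (fun η : (Fin d → ℤ) → Bool => η x) ⁻¹' {b x} := by
    ext η
    simp
  rw [this]
  exact MeasurableSet.biInter (Set.to_countable _)
    (fun x _ => (measurable_pi_apply x) (measurableSet_singleton (b x)))

lemma cyl_measure {d : ℕ} (ρ : ℝ) (hρ0 : 0 ≤ ρ) (hρ1 : ρ ≤ 1)
    (μ : Measure ((Fin d → ℤ) → Bool)) (hμ : IsBernoulliProduct ρ μ)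
    (Λℓ : Finset (Fin d → ℤ)) (B : Finset (Fin d → ℤ)) (hB : B ⊆ Λℓ) :
    μ {η | ∀ x ∈ Λℓ, η x = configOf B x}
      = ENNReal.ofReal (ρ^B.card * (1-ρ)^(Λℓ.card - B.card)) := by
  rw [hμ.2 Λℓ (configOf B)]
  have h1 : ∀ x, (if configOf B x then ρ else 1 - ρ) = (if x ∈ B then ρ else 1 - ρ) := by
    intro x
    simp [configOf]
  calc ∏ x ∈ Λℓ, ENNReal.ofReal (if configOf B x then ρ else 1 - ρ)
      = ∏ x ∈ Λℓ, ENNReal.ofReal (if x ∈ B then ρ else 1 - ρ) := by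
        exact Finset.prod_congr rfl fun x _ => by rw [h1]
    _ = (∏ x ∈ Λℓ.filter (· ∈ B), ENNReal.ofReal ρ)
        * ∏ x ∈ Λℓ.filter (¬ · ∈ B), ENNReal.ofReal (1-ρ) := by
        rw [← Finset.prod_filter_mul_prod_filter_not Λℓ (· ∈ B)]
        congr 1
        · exact Finset.prod_congr rfl fun x hx => by simp [(Finset.mem_filter.1 hx).2]
        · exact Finset.prod_congr rfl fun x hx => by simp [(Finset.mem_filter.1 hx).2]
    _ = ENNReal.ofReal ρ ^ B.card * ENNReal.ofReal (1-ρ) ^ (Λℓ.card - B.card) := by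
        rw [Finset.prod_const, Finset.prod_const]
        congr 2
        · rw [Finset.filter_mem_eq_inter, Finset.inter_eq_right.2 hB]
        · rw [Finset.filter_not, Finset.filter_mem_eq_inter, Finset.inter_eq_right.2 hB,
            Finset.card_sdiff_of_subset hB]
    _ = ENNReal.ofReal (ρ^B.card * (1-ρ)^(Λℓ.card - B.card)) := by
        rw [ENNReal.ofReal_mul (by positivity), ENNReal.ofReal_pow hρ0,
          ENNReal.ofReal_pow (by linarith)]

lemma integral_decomp {d : ℕ} (ρ : ℝ) (hρ0 : 0 ≤ ρ) (hρ1 : ρ ≤ 1)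
    (μ : Measure ((Fin d → ℤ) → Bool)) (hμ : IsBernoulliProduct ρ μ)
    (Λℓ : Finset (Fin d → ℤ)) (f : ((Fin d → ℤ) → Bool) → ℝ)
    (hloc : ∀ η η', (∀ x ∈ Λℓ, η x = η' x) → f η = f η') :
    ∫ η, f η ∂μ = ∑ N ∈ range (Λℓ.card + 1),
      (ρ^N * (1-ρ)^(Λℓ.card - N)) * ∑ B ∈ Λℓ.powersetCard N, f (configOf B) := by
  haveI : IsProbabilityMeasure μ := hμ.1
  have hfeq : ∀ η, f η = ∑ B ∈ Λℓ.powerset,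
      Set.indicator {η' | ∀ x ∈ Λℓ, η' x = configOf B x} (fun _ => f (configOf B)) η := by
    intro η
    classical
    set B₀ := Λℓ.filter (fun x => η x = true) with hB0
    have hmem : η ∈ {η' | ∀ x ∈ Λℓ, η' x = configOf B₀ x} := by
      intro x hx
      simp only [hB0, configOf, Finset.mem_filter]
      cases h : η x
      · simp [h, hx]
      · simp [h, hx]
    rw [Finset.sum_eq_single B₀]
    · rw [Set.indicator_of_mem hmem]
      exact hloc η (configOf B₀) hmem
    · intro B hBp hne
      apply Set.indicator_of_notMem
      intro hηB
      apply hne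
      have hBsub := Finset.mem_powerset.1 hBp
      ext x
      simp only [hB0, Finset.mem_filter]
      constructor
      · intro hxB
        have hx : x ∈ Λℓ := hBsub hxB
        refine ⟨hx, ?_⟩
        have := hηB x hx
        simp [configOf, hxB] at this
        exact this
      · rintro ⟨hx, hηx⟩
        have := hηB x hx
        rw [hηx] at this
        simpa [configOf] using this.symm
    · intro h
      exact absurd (Finset.mem_powerset.2 (Finset.filter_subset _ _)) h
  calc ∫ η, f η ∂μ
      = ∫ η, ∑ B ∈ Λℓ.powerset,
          Set.indicator {η' | ∀ x ∈ Λℓ, η' x = configOf B x} (fun _ => f (configOf B)) η ∂μ := by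
        exact integral_congr_ae (Filter.Eventually.of_forall hfeq)
    _ = ∑ B ∈ Λℓ.powerset, ∫ η,
          Set.indicator {η' | ∀ x ∈ Λℓ, η' x = configOf B x} (fun _ => f (configOf B)) η ∂μ := by
        apply integral_finset_sum
        intro B _
        rw [integrable_indicator_iff (cyl_measurable Λℓ (configOf B))]
        exact integrableOn_const (measure_ne_top μ _)
    _ = ∑ B ∈ Λℓ.powerset,
          (μ {η' | ∀ x ∈ Λℓ, η' x = configOf B x}).toReal • f (configOf B) := by
        exact Finset.sum_congr rfl fun B _ =>
          integral_indicator_const (f (configOf B)) (cyl_measurable Λℓ (configOf B))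
    _ = ∑ B ∈ Λℓ.powerset, (ρ^B.card * (1-ρ)^(Λℓ.card - B.card)) * f (configOf B) := by
        apply Finset.sum_congr rfl
        intro B hBp
        rw [cyl_measure ρ hρ0 hρ1 μ hμ Λℓ B (Finset.mem_powerset.1 hBp)]
        rw [ENNReal.toReal_ofReal (mul_nonneg (pow_nonneg hρ0 _) (pow_nonneg (by linarith) _)), smul_eq_mul]
    _ = ∑ N ∈ range (Λℓ.card + 1), ∑ B ∈ Λℓ.powersetCard N,
          (ρ^B.card * (1-ρ)^(Λℓ.card - B.card)) * f (configOf B) := by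
        rw [Finset.powerset_card_disjiUnion]; exact Finset.sum_disjiUnion ..
    _ = ∑ N ∈ range (Λℓ.card + 1),
          (ρ^N * (1-ρ)^(Λℓ.card - N)) * ∑ B ∈ Λℓ.powersetCard N, f (configOf B) := by
        apply Finset.sum_congr rfl
        intro N _
        rw [Finset.mul_sum]
        exact Finset.sum_congr rfl fun B hB => by
          rw [(Finset.mem_powersetCard.1 hB).2]


lemma lineF_eq (m : ℕ) (hm : 0 < m) :
    ((Finset.Icc (-(m:ℤ)) (m:ℤ)).filter fun k => -(m:ℤ) < 2*k ∧ 2*k < (m:ℤ))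
      = Finset.Icc (-((((m-1)/2 : ℕ)) : ℤ)) ((((m-1)/2 : ℕ)) : ℤ) := by
  ext k
  simp only [Finset.mem_filter, Finset.mem_Icc]
  omega

lemma cube_card (d m : ℕ) (hm : 0 < m) : (cubeF d m).card = (2*((m-1)/2)+1)^d := by
  unfold cubeF
  rw [Fintype.card_piFinset]
  rw [Finset.prod_congr rfl (fun (i : Fin d) _ => by rw [lineF_eq m hm])]
  rw [Finset.prod_const, Finset.card_univ, Fintype.card_fin]
  congr 1
  rw [Int.card_Icc]
  omega

lemma cube_subset (d : ℕ) {l L : ℕ} (h : l ≤ L) : cubeF d l ⊆ cubeF d L := by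
  intro η hη
  rw [cubeF, Fintype.mem_piFinset] at *
  intro i
  have := hη i
  simp only [Finset.mem_filter, Finset.mem_Icc] at *
  omega

end Aux

/-- Local equivalence of ensembles, positive case (Lemma 6.9 (1)): if `10ℓ² ≤ L`,
`0 ≤ M ≤ L^d`, and `f` depends only on coordinates in `Λ_ℓ` with all its canonical
averages `⟨f⟩_{Λ_ℓ,N}` nonnegative, then
`⟨f⟩_{Λ_L,M} ≤ (1 + 4(ℓ²/L)^d) ⟨f⟩_{ρ̂}` with `ρ̂ = M/|Λ_L|`. -/


theorem local_equivalence_positive {d : ℕ} (L ℓ : ℕ) (hL : 0 < L) (hℓ : 0 < ℓ)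
    (hscale : 10 * ℓ ^ 2 ≤ L) (M : ℕ) (hM : M ≤ L ^ d)
    (μ : Measure ((Fin d → ℤ) → Bool))
    (hμ : IsBernoulliProduct ((M : ℝ) / ((cubeF d L).card : ℝ)) μ)
    (f : ((Fin d → ℤ) → Bool) → ℝ)
    (hloc : ∀ η η', (∀ x ∈ cubeF d ℓ, η x = η' x) → f η = f η')
    (hpos : ∀ N : ℕ, 0 ≤ canonicalAvg (cubeF d ℓ) N f) :
    canonicalAvg (cubeF d L) M f ≤
      (1 + 4 * ((ℓ : ℝ) ^ 2 / (L : ℝ)) ^ d) * ∫ η, f η ∂μ := by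
  classical
  haveI : IsProbabilityMeasure μ := hμ.1
  set K := (cubeF d L).card with hKdef
  set n := (cubeF d ℓ).card with hndef
  set ε : ℝ := 4 * ((ℓ : ℝ)^2 / (L : ℝ))^d with hεdef
  set ρ : ℝ := (M : ℝ) / (K : ℝ) with hρdef
  have hℓL : ℓ ≤ L :=
    le_trans (Nat.le_self_pow (by norm_num) ℓ)
      (le_trans (Nat.le_mul_of_pos_left (ℓ^2) (by norm_num)) hscale)
  have hsub : cubeF d ℓ ⊆ cubeF d L := cube_subset d hℓL
  have hnK : n ≤ K := Finset.card_le_card hsub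
  have haℓ : n = (2*((ℓ-1)/2)+1)^d := cube_card d ℓ hℓ
  have haL : K = (2*((L-1)/2)+1)^d := cube_card d L hL
  have hKpos : 0 < K := by rw [haL]; positivity
  have hKR : (0:ℝ) < (K:ℝ) := by exact_mod_cast hKpos
  have hMK : M ≤ K := by
    by_contra hcon
    push_neg at hcon
    have hρgt : (1:ℝ) < ρ := by
      rw [hρdef, lt_div_iff₀ hKR]
      have : (K:ℝ) < (M:ℝ) := by exact_mod_cast hcon
      linarith
    have hprob : μ {η | ∀ x ∈ ({fun _ => 0} : Finset (Fin d → ℤ)), η x = (fun _ => true) x} ≤ 1 :=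
      prob_le_one
    rw [hμ.2 ({fun _ => 0} : Finset (Fin d → ℤ)) (fun _ => true), Finset.prod_singleton] at hprob
    simp only [if_true] at hprob
    rw [ENNReal.ofReal_le_one] at hprob
    linarith
  have hρ0 : 0 ≤ ρ := div_nonneg (Nat.cast_nonneg M) hKR.le
  have hρ1 : ρ ≤ 1 := by
    rw [hρdef, div_le_one hKR]
    exact_mod_cast hMK
  -- key ℕ inequalities
  have haℓ' : 2*((ℓ-1)/2)+1 ≤ ℓ := by omega
  have hbL : L ≤ 2*((L-1)/2)+1 + 1 := by omega
  have hkeyN : (n - 1) * L^d ≤ (ℓ^2)^d * K := by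
    by_cases hl1 : ℓ = 1
    · have hn1 : n = 1 := by rw [haℓ, hl1]; norm_num
      rw [hn1]
      simp
    · have hl2 : 2 ≤ ℓ := by omega
      have hab : (2*((ℓ-1)/2)+1) * L ≤ ℓ^2 * (2*((L-1)/2)+1) := by
        have e1 : (2*((ℓ-1)/2)+1) * L ≤ ℓ * L := Nat.mul_le_mul_right L haℓ'
        have e2 : ℓ*L + ℓ^2 ≤ ℓ^2*L := by
          have t1 : ℓ*ℓ ≤ ℓ*L := Nat.mul_le_mul_left ℓ hℓL
          have t2 : 2*(ℓ*L) ≤ ℓ*(ℓ*L) := Nat.mul_le_mul_right (ℓ*L) hl2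
          calc ℓ*L + ℓ^2 = ℓ*L + ℓ*ℓ := by ring
            _ ≤ ℓ*L + ℓ*L := Nat.add_le_add_left t1 _
            _ = 2*(ℓ*L) := by ring
            _ ≤ ℓ*(ℓ*L) := t2
            _ = ℓ^2*L := by ring
        have e4 : ℓ^2 * L ≤ ℓ^2*(2*((L-1)/2)+1) + ℓ^2 := by
          calc ℓ^2*L ≤ ℓ^2*((2*((L-1)/2)+1)+1) := Nat.mul_le_mul_left _ hbL
            _ = ℓ^2*(2*((L-1)/2)+1) + ℓ^2 := by ring
        have e5 : (2*((ℓ-1)/2)+1) * L + ℓ^2 ≤ ℓ^2*(2*((L-1)/2)+1) + ℓ^2 :=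
          le_trans (Nat.add_le_add_right e1 _) (le_trans e2 e4)
        omega
      calc (n-1) * L^d ≤ n * L^d := Nat.mul_le_mul_right _ (Nat.sub_le n 1)
        _ = ((2*((ℓ-1)/2)+1)*L)^d := by rw [haℓ, mul_pow]
        _ ≤ (ℓ^2*(2*((L-1)/2)+1))^d := Nat.pow_le_pow_left hab d
        _ = (ℓ^2)^d * K := by rw [mul_pow, haL]
  have hkey2N : 4*(n-1) ≤ K := by
    rcases Nat.eq_zero_or_pos d with hd0 | hd
    · have hn1 : n = 1 := by rw [haℓ, hd0, pow_zero]
      rw [hn1]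
      simp
    · have h4a : 4*(2*((ℓ-1)/2)+1) ≤ 2*((L-1)/2)+1 := by
        nlinarith [hscale, hbL, haℓ', hℓ]
      calc 4*(n-1) ≤ 4*n := by omega
        _ = 4*(2*((ℓ-1)/2)+1)^d := by rw [haℓ]
        _ ≤ 4^d*(2*((ℓ-1)/2)+1)^d := by
            exact Nat.mul_le_mul_right _ (le_trans (by norm_num) (Nat.pow_le_pow_right (by norm_num) hd))
        _ = (4*(2*((ℓ-1)/2)+1))^d := by rw [mul_pow]
        _ ≤ (2*((L-1)/2)+1)^d := Nat.pow_le_pow_left h4a d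
        _ = K := haL.symm
  have hLdpos : (0:ℝ) < (L:ℝ)^d := by positivity
  have h1R : 4*((n-1:ℕ):ℝ) ≤ ε*(K:ℝ) := by
    have hεK : ε*(K:ℝ) = 4*(((((ℓ:ℝ)^2)^d)*(K:ℝ))/(L:ℝ)^d) := by
      rw [hεdef, div_pow]
      ring
    rw [hεK]
    have hmain : ((n-1:ℕ):ℝ) ≤ ((((ℓ:ℝ)^2)^d)*(K:ℝ))/(L:ℝ)^d := by
      rw [le_div_iff₀ hLdpos]
      exact_mod_cast hkeyN
    linarith
  have h2R : 4*((n-1:ℕ):ℝ) ≤ (K:ℝ) := by exact_mod_cast hkey2N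
  -- decompositions
  have hcanon := canonical_decomp (cubeF d L) (cubeF d ℓ) hsub M f hloc
  rw [← hKdef, ← hndef] at hcanon
  have hint := integral_decomp ρ hρ0 hρ1 μ hμ (cubeF d ℓ) f hloc
  rw [← hndef] at hint
  have hchoose : ((cubeF d L).powersetCard M).card = K.choose M := by
    rw [Finset.card_powersetCard, ← hKdef]
  have hchooseR : (0:ℝ) < (K.choose M : ℝ) := by exact_mod_cast Nat.choose_pos hMK
  have hSnn : ∀ N, 0 ≤ ∑ B ∈ (cubeF d ℓ).powersetCard N, f (configOf B) := by
    intro N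
    by_cases hc : ((cubeF d ℓ).powersetCard N) = ∅
    · rw [hc]
      simp
    · have hcpos : (0:ℝ) < (((cubeF d ℓ).powersetCard N).card : ℝ) := by
        exact_mod_cast Finset.card_pos.2 (Finset.nonempty_of_ne_empty hc)
      have h0 := hpos N
      rw [canonicalAvg] at h0
      have := mul_nonneg h0 hcpos.le
      rwa [div_mul_cancel₀ _ hcpos.ne'] at this
  have hε0 : 0 ≤ ε := by rw [hεdef]; positivity
  have hcoef : ∀ N, N ≤ n →
      (if N ≤ M then ((K - n).choose (M-N) : ℝ) else 0) / (K.choose M : ℝ)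
        ≤ (1+ε) * (ρ^N * (1-ρ)^(n-N)) := by
    intro N hNn
    have hbase : 0 ≤ (1+ε) * (ρ^N * (1-ρ)^(n-N)) :=
      mul_nonneg (by linarith) (mul_nonneg (pow_nonneg hρ0 _) (pow_nonneg (by linarith) _))
    split_ifs with hNM
    · by_cases hsup : M - N ≤ K - n
      · exact weight_bound K n M N ε hnK hMK hNM hNn hsup hKpos h1R h2R
      · rw [Nat.choose_eq_zero_of_lt (by omega), Nat.cast_zero, zero_div]
        exact hbase
    · rw [zero_div]
      exact hbase
  rw [canonicalAvg, hcanon, hchoose, Finset.sum_div, hint, Finset.mul_sum]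
  apply Finset.sum_le_sum
  intro N hN
  have hNn : N ≤ n := by
    have := Finset.mem_range.1 hN
    omega
  calc ((if N ≤ M then ((K - n).choose (M-N) : ℝ) else 0)
          * ∑ B ∈ (cubeF d ℓ).powersetCard N, f (configOf B)) / (K.choose M : ℝ)
      = ((if N ≤ M then ((K - n).choose (M-N) : ℝ) else 0) / (K.choose M : ℝ))
          * ∑ B ∈ (cubeF d ℓ).powersetCard N, f (configOf B) := by ring
    _ ≤ ((1+ε) * (ρ^N * (1-ρ)^(n-N)))
          * ∑ B ∈ (cubeF d ℓ).powersetCard N, f (configOf B) :=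
        mul_le_mul_of_nonneg_right (hcoef N hNn) (hSnn N)
    _ = (1+ε) * ((ρ^N * (1-ρ)^(n-N))
          * ∑ B ∈ (cubeF d ℓ).powersetCard N, f (configOf B)) := by ring
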